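/- Let S be a left cancellative monoid and R a ring with an S-grading with support of size d, where the neutral component R_e is nil of bounded index s. Then R is nil of bounded index with nd_nil(R) ≤ 2sd²·(d^{2d} − 1)/(d − 1), assuming R_e is f-commutative. -/

import Mathlib

/-- Product `a * l₀ * l₁ * ⋯` of a nonempty list of ring elements. -/
def mulList {R : Type*} [Mul R] (a : R) (l : List R) : R := l.foldl (· * ·) a

/-- `pw a n` is `aⁿ` for `n ≥ 1` (junk value `0` at `n = 0`). -/
def pw {R : Type*} [Mul R] [Zero R] (a : R) : ℕ → R
  | 0 => 0
  | 1 => a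
  | n + 2 => pw a (n + 1) * a

/-- Product of `n` elements given by `f` (junk `0` when `n = 0`). -/
def finProd {R : Type*} [Mul R] [Zero R] : {n : ℕ} → (Fin n → R) → R
  | 0, _ => 0
  | n + 1, f => mulList (f 0) (List.ofFn fun i : Fin n => f i.succ)

/-- `R ^ n = 0`: every product of `n` elements of `R` vanishes. -/
def PowZero (R : Type*) [Mul R] [Zero R] (n : ℕ) : Prop :=
  ∀ (a : R) (l : List R), l.length + 1 = n → mulList a l = 0

/-- `T ^ n = 0` for a subset `T` of a ring. -/
def PowZeroOn {R : Type*} [Mul R] [Zero R] (T : Set R) (n : ℕ) : Prop :=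
  ∀ (a : R) (l : List R), a ∈ T → (∀ x ∈ l, x ∈ T) → l.length + 1 = n → mulList a l = 0

/-- `a` is nilpotent: `aⁿ = 0` for some `n ≥ 1`. -/
def IsNilE {R : Type*} [Mul R] [Zero R] (a : R) : Prop := ∃ n, 1 ≤ n ∧ pw a n = 0

/-- A nil ring: every element is nilpotent. -/
def IsNilRing (R : Type*) [Mul R] [Zero R] : Prop := ∀ a : R, IsNilE a

/-- An `S`-grading of the ring `R`: a direct sum decomposition into additive
subgroups with `R_g R_h ⊆ R_{gh}`. -/
structure IsGrading {S R : Type*} [Monoid S] [NonUnitalRing R] [DecidableEq S]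
    (A : S → AddSubgroup R) : Prop where
  mul_mem : ∀ {g h : S} {x y : R}, x ∈ A g → y ∈ A h → x * y ∈ A (g * h)
  isInternal : DirectSum.IsInternal A

/-- Grading by an additively written monoid. -/
structure IsAddGrading {S R : Type*} [AddMonoid S] [NonUnitalRing R] [DecidableEq S]
    (A : S → AddSubgroup R) : Prop where
  mul_mem : ∀ {g h : S} {x y : R}, x ∈ A g → y ∈ A h → x * y ∈ A (g + h)
  isInternal : DirectSum.IsInternal A

/-- The subset `T` of a ring is `f`-commutative: there are a semigroup `G` acting on it
from the left and a map `f` with `a*b = f(a,b)·(b*a)`. -/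
def IsFCommutativeOn {R : Type*} [Mul R] (T : Set R) : Prop :=
  ∃ (G : Type) (_ : Semigroup G) (act : G → R → R),
    (∀ l m : G, ∀ x : R, x ∈ T → act (l * m) x = act l (act m x)) ∧
    (∀ l : G, ∀ x : R, x ∈ T → act l x ∈ T) ∧
    (∀ l : G, ∀ x y : R, x ∈ T → y ∈ T → act l (x * y) = act l x * y) ∧
    ∃ f : R → R → G, ∀ a b : R, a ∈ T → b ∈ T → a * b = act (f a b) (b * a)

/-- The ring `R` is `f`-commutative. -/
def IsFCommutative (R : Type*) [Mul R] : Prop :=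
  ∃ (G : Type) (_ : Semigroup G) (act : G → R → R),
    (∀ l m : G, ∀ x : R, act (l * m) x = act l (act m x)) ∧
    (∀ l : G, ∀ x y : R, act l (x * y) = act l x * y) ∧
    ∃ f : R → R → G, ∀ a b : R, a * b = act (f a b) (b * a)

/-- The order of `g`: least `n ≥ 1` with `gⁿ = 1`, and `0` if no such `n` exists. -/
noncomputable def ordOf {S : Type*} [Monoid S] (g : S) : ℕ := sInf {n | 1 ≤ n ∧ g ^ n = 1}

section basic
variable {R : Type*} [NonUnitalRing R]
theorem mulList_cons' (a x : R) (l : List R) : mulList a (x :: l) = mulList (a * x) l := rfl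
theorem mulList_cons (l : List R) : ∀ (a x : R), mulList a (x :: l) = a * mulList x l := by
  induction l with
  | nil => intro a x; rfl
  | cons y t ih => intro a x; rw [mulList_cons', ih (a*x) y, ih x y, mul_assoc]
theorem mulList_append (a : R) (l₁ l₂ : List R) :
    mulList a (l₁ ++ l₂) = mulList (mulList a l₁) l₂ := List.foldl_append ..
theorem mulList_zero (l : List R) : mulList (0 : R) l = 0 := by
  induction l with
  | nil => rfl
  | cons x t ih => rw [mulList_cons', zero_mul]; exact ih
def lprd : List R → R
  | [] => 0
  | x :: t => mulList x t
theorem lprd_cons (x : R) (t : List R) (h : t ≠ []) : lprd (x :: t) = x * lprd t := by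
  cases t with
  | nil => exact absurd rfl h
  | cons y u => exact mulList_cons u x y
theorem lprd_append (l₁ l₂ : List R) (h₁ : l₁ ≠ []) (h₂ : l₂ ≠ []) :
    lprd (l₁ ++ l₂) = lprd l₁ * lprd l₂ := by
  cases l₁ with
  | nil => exact absurd rfl h₁
  | cons x t =>
    cases l₂ with
    | nil => exact absurd rfl h₂
    | cons y u =>
      show mulList x (t ++ y :: u) = _
      rw [mulList_append, mulList_cons]; rfl
theorem mulList_eq_mul_lprd (z : R) (t : List R) (h : t ≠ []) : mulList z t = z * lprd t := by
  cases t with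
  | nil => exact absurd rfl h
  | cons y u => rw [mulList_cons]; rfl

theorem lprd_eq_zero_append (l₁ l₂ : List R) (h₁ : l₁ ≠ []) (h0 : lprd l₁ = 0) :
    lprd (l₁ ++ l₂) = 0 := by
  cases l₂ with
  | nil => rw [List.append_nil]; exact h0
  | cons y u => rw [lprd_append l₁ _ h₁ (by simp), h0, zero_mul]

theorem pw_succ (a : R) (k : ℕ) (hk : 1 ≤ k) : pw a (k + 1) = pw a k * a := by
  cases k with
  | zero => omega
  | succ n => rfl
theorem mulList_replicate (c : R) (j : ℕ) : mulList c (List.replicate j c) = pw c (j + 1) := by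
  induction j with
  | zero => rfl
  | succ n ih =>
    rw [List.replicate_succ', mulList_append, ih]
    show pw c (n+1) * c = _
    rw [← pw_succ c (n+1) (by omega)]
theorem pw_eq_zero_of_le (a : R) (s k : ℕ) (hs : 1 ≤ s) (h : pw a s = 0) (hk : s ≤ k) :
    pw a k = 0 := by
  induction k with
  | zero => omega
  | succ n ih =>
    rcases Nat.eq_or_lt_of_le hk with he | hl
    · rw [← he]; exact h
    · have hn : s ≤ n := by omega
      rw [pw_succ a n (le_trans hs hn), ih hn, zero_mul]
end basic

section fcomm
variable {R : Type*} [NonUnitalRing R] (T : Set R) {G : Type} [Semigroup G]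
  (act : G → R → R)
  (h1 : ∀ l m : G, ∀ x : R, x ∈ T → act (l * m) x = act l (act m x))
  (h2 : ∀ l : G, ∀ x : R, x ∈ T → act l x ∈ T)
  (h3 : ∀ l : G, ∀ x y : R, x ∈ T → y ∈ T → act l (x * y) = act l x * y)
  (f : R → R → G)
  (hf : ∀ a b : R, a ∈ T → b ∈ T → a * b = act (f a b) (b * a))
  (hT0 : (0 : R) ∈ T)
  (hTm : ∀ x ∈ T, ∀ y ∈ T, x * y ∈ T)

def inT : List R → Prop := fun l => ∀ x ∈ l, x ∈ T

include h3 hT0 in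
theorem act_zero (g : G) : act g (0 : R) = 0 := by
  have := h3 g 0 0 hT0 hT0
  rw [zero_mul, mul_zero] at this
  exact this

include hTm in
theorem lprd_mem : ∀ l : List R, l ≠ [] → inT T l → lprd l ∈ T := by
  intro l
  induction l with
  | nil => intro h; exact absurd rfl h
  | cons x t ih =>
    intro _ hm
    cases t with
    | nil => exact hm x (by simp)
    | cons y u =>
      rw [lprd_cons x _ (by simp)]
      exact hTm x (hm x (by simp)) _ (ih (by simp) (fun z hz => hm z (by simp [hz])))

/-- Reachability: the product of `l` equals the product of `l'` possibly twisted by the action. -/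
def Reach (l l' : List R) : Prop :=
  lprd l = lprd l' ∨ ∃ g : G, lprd l = act g (lprd l')

theorem reach_refl (l : List R) : Reach (G := G) act l l := Or.inl rfl

include h1 hTm in
theorem reach_trans {l l' l'' : List R} (h : Reach (G := G) act l l')
    (h' : Reach (G := G) act l' l'') (hne : l'' ≠ []) (hm : inT T l'') :
    Reach (G := G) act l l'' := by
  have hmem : lprd l'' ∈ T := lprd_mem T hTm l'' hne hm
  rcases h with h | ⟨g, hg⟩ <;> rcases h' with h' | ⟨g', hg'⟩
  · exact Or.inl (h.trans h')
  · exact Or.inr ⟨g', h.trans hg'⟩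
  · exact Or.inr ⟨g, by rw [hg, h']⟩
  · exact Or.inr ⟨g * g', by rw [hg, hg', ← h1 g g' _ hmem]⟩

include h3 hT0 in
theorem reach_zero {l l' : List R} (h : Reach (G := G) act l l') (h0 : lprd l' = 0) :
    lprd l = 0 := by
  rcases h with h | ⟨g, hg⟩
  · rw [h, h0]
  · rw [hg, h0, act_zero T act h3 hT0]

include h3 hf hTm in
theorem reach_swap (a b : R) (t : List R) (ha : a ∈ T) (hb : b ∈ T) (ht : inT T t) :
    Reach (G := G) act (a :: b :: t) (b :: a :: t) := by
  refine Or.inr ⟨f a b, ?_⟩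
  cases t with
  | nil =>
    show mulList a [b] = act _ (mulList b [a])
    exact hf a b ha hb
  | cons y u =>
    have htne : (y :: u : List R) ≠ [] := by simp
    have htm : lprd (y :: u) ∈ T := lprd_mem T hTm _ htne ht
    show mulList a (b :: y :: u) = act _ (mulList b (a :: y :: u))
    rw [mulList_cons' a b, mulList_cons' b a,
      mulList_eq_mul_lprd _ _ htne, mulList_eq_mul_lprd _ _ htne,
      hf a b ha hb, h3 _ _ _ (hTm b hb a ha) htm]

include hf hTm in
theorem reach_rot (a : R) (t : List R) (ha : a ∈ T) (ht : inT T t) (htne : t ≠ []) :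
    Reach (G := G) act (a :: t) (t ++ [a]) := by
  have htm : lprd t ∈ T := lprd_mem T hTm t htne ht
  refine Or.inr ⟨f a (lprd t), ?_⟩
  have h1' : lprd (a :: t) = a * lprd t := lprd_cons a t htne
  have h2' : lprd (t ++ [a]) = lprd t * a := by
    rw [lprd_append t [a] htne (by simp)]; rfl
  rw [h1', h2', hf a (lprd t) ha htm]

/-- rotate a list: head moves to the back. -/
def rotL {α : Type*} : List α → List α
  | [] => []
  | x :: t => t ++ [x]

theorem rotL_perm {α : Type*} (l : List α) : l.Perm (rotL l) := by
  cases l with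
  | nil => exact List.Perm.refl _
  | cons x t => exact (List.perm_append_comm (l₁ := [x]) (l₂ := t))

theorem rotL_iter_perm {α : Type*} (k : ℕ) (l : List α) : l.Perm (rotL^[k] l) := by
  induction k with
  | zero => exact List.Perm.refl _
  | succ n ih => rw [Function.iterate_succ_apply']; exact ih.trans (rotL_perm _)

theorem rotL_iter_append {α : Type*} : ∀ (u w : List α), rotL^[u.length] (u ++ w) = w ++ u := by
  intro u
  induction u with
  | nil => intro w; simp
  | cons x u' ih =>
    intro w
    have : rotL ((x :: u') ++ w) = u' ++ (w ++ [x]) := by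
      show (u' ++ w) ++ [x] = _
      rw [List.append_assoc]
    rw [List.length_cons, Function.iterate_succ_apply, this, ih (w ++ [x]),
      List.append_assoc]
    rfl

include hf hTm in
theorem reach_rotL (l : List R) (hne : l ≠ []) (hm : inT T l) :
    Reach (G := G) act l (rotL l) := by
  cases l with
  | nil => exact absurd rfl hne
  | cons x t =>
    cases t with
    | nil => exact reach_refl act _
    | cons y u =>
      exact reach_rot T act f hf hTm x (y :: u) (hm x (by simp))
        (fun z hz => hm z (by simp [hz])) (by simp)

include h1 hf hTm in
theorem reach_rotL_iter (k : ℕ) (l : List R) (hne : l ≠ []) (hm : inT T l) :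
    Reach (G := G) act l (rotL^[k] l) := by
  induction k with
  | zero => exact reach_refl act _
  | succ n ih =>
    rw [Function.iterate_succ_apply']
    have hp : l.Perm (rotL^[n] l) := rotL_iter_perm n l
    have hne' : rotL^[n] l ≠ [] := by
      intro h
      rw [h] at hp
      exact hne (List.Perm.eq_nil hp)
    have hm' : inT T (rotL^[n] l) := fun z hz => hm z (hp.mem_iff.mpr hz)
    have hp2 : (rotL^[n] l).Perm (rotL (rotL^[n] l)) := rotL_perm _
    refine reach_trans T act h1 hTm ih
      (reach_rotL T act f hf hTm _ hne' hm') ?_ ?_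
    · intro h
      rw [h] at hp2
      exact hne' (List.Perm.eq_nil hp2)
    · exact fun z hz => hm' z (hp2.mem_iff.mpr hz)

/-- one adjacent transposition anywhere. -/
def AdjSw {α : Type*} (l l' : List α) : Prop :=
  ∃ u a b v, l = u ++ a :: b :: v ∧ l' = u ++ b :: a :: v

theorem adjSw_perm {α : Type*} {l l' : List α} (h : AdjSw l l') : l.Perm l' := by
  obtain ⟨u, a, b, v, rfl, rfl⟩ := h
  exact (List.Perm.append_left u (List.Perm.swap b a v))

theorem perm_adjChain {α : Type*} {l l' : List α} (h : l.Perm l') :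
    Relation.ReflTransGen AdjSw l l' := by
  induction h with
  | nil => exact Relation.ReflTransGen.refl
  | cons x _ ih =>
    exact Relation.ReflTransGen.lift (fun t => x :: t)
      (fun a b ⟨u, p, q, v, h1, h2⟩ => ⟨x :: u, p, q, v, by simp [h1], by simp [h2]⟩) _ _ ih
  | swap x y l => exact Relation.ReflTransGen.single ⟨[], y, x, l, rfl, rfl⟩
  | trans _ _ ih1 ih2 => exact ih1.trans ih2

theorem adjChain_perm {α : Type*} {l l' : List α} (h : Relation.ReflTransGen AdjSw l l') :
    l.Perm l' := by
  induction h with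
  | refl => exact List.Perm.refl _
  | tail _ hbc ih => exact ih.trans (adjSw_perm hbc)

include h1 h3 hf hTm in
theorem reach_adjSw {l l' : List R} (h : AdjSw l l') (hm : inT T l) :
    Reach (G := G) act l l' := by
  obtain ⟨u, a, b, v, rfl, rfl⟩ := h
  have hmu : inT T u := fun z hz => hm z (by simp [hz])
  have hma : a ∈ T := hm a (by simp)
  have hmb : b ∈ T := hm b (by simp)
  have hmv : inT T v := fun z hz => hm z (by simp [hz])
  -- step 1 : rotate u to the back
  have e1 : rotL^[u.length] (u ++ a :: b :: v) = a :: b :: (v ++ u) := by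
    rw [rotL_iter_append u (a :: b :: v)]; simp
  have r1 : Reach (G := G) act (u ++ a :: b :: v) (a :: b :: (v ++ u)) := by
    rw [← e1]
    exact reach_rotL_iter T act h1 f hf hTm u.length _ (by simp) hm
  -- step 2 : swap
  have hmvu : inT T (v ++ u) := fun z hz => by
    rcases List.mem_append.mp hz with h | h
    · exact hmv z h
    · exact hmu z h
  have r2 : Reach (G := G) act (a :: b :: (v ++ u)) (b :: a :: (v ++ u)) :=
    reach_swap T act h3 f hf hTm a b (v ++ u) hma hmb hmvu
  -- step 3 : rotate back
  have e3 : rotL^[(b :: a :: v).length] ((b :: a :: v) ++ u) = u ++ b :: a :: v :=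
    rotL_iter_append (b :: a :: v) u
  have r3 : Reach (G := G) act (b :: a :: (v ++ u)) (u ++ b :: a :: v) := by
    rw [← e3]
    refine reach_rotL_iter T act h1 f hf hTm _ _ (by simp) ?_
    intro z hz
    simp only [List.cons_append, List.mem_cons, List.mem_append] at hz
    rcases hz with rfl | rfl | h | h
    · exact hmb
    · exact hma
    · exact hmv z h
    · exact hmu z h
  have hmfinal : inT T (u ++ b :: a :: v) := by
    intro z hz
    simp only [List.mem_append, List.mem_cons] at hz
    rcases hz with h | rfl | rfl | h
    · exact hmu z h
    · exact hmb
    · exact hma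
    · exact hmv z h
  have r12 := reach_trans T act h1 hTm r1 r2 (by simp) (by
    intro z hz
    simp only [List.mem_cons, List.mem_append] at hz
    rcases hz with rfl | rfl | h | h
    · exact hmb
    · exact hma
    · exact hmv z h
    · exact hmu z h)
  exact reach_trans T act h1 hTm r12 r3 (by simp) hmfinal

include h1 h3 hf hTm in
theorem reach_of_perm {l l' : List R} (h : l.Perm l') (hm : inT T l) :
    Reach (G := G) act l l' := by
  have hchain := perm_adjChain h
  clear h
  induction hchain with
  | refl => exact reach_refl act _
  | @tail b c hab hbc ih =>
    have hpb : l.Perm b := adjChain_perm hab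
    have hmb : inT T b := fun z hz => hm z (hpb.mem_iff.mpr hz)
    have hpc : b.Perm c := adjSw_perm hbc
    have hmc : inT T c := fun z hz => hmb z (hpc.mem_iff.mpr hz)
    by_cases hcne : c = []
    · subst hcne
      have : b = [] := List.Perm.eq_nil hpc
      subst this
      exact ih
    · exact reach_trans T act h1 hTm ih
        (reach_adjSw T act h1 h3 f hf hTm hbc hmb) hcne hmc

include h1 h3 hf hT0 hTm in
theorem lprd_eq_zero_of_count [DecidableEq R] (l : List R) (hm : inT T l) (c : R)
    (s : ℕ) (hs : 1 ≤ s) (hcount : s ≤ l.count c) (h0 : pw c s = 0) : lprd l = 0 := by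
  have hk : 1 ≤ l.count c := le_trans hs hcount
  set k := l.count c with hkdef
  have hfilter : l.filter (fun x => x == c) = List.replicate k c := by
    rw [hkdef]
    exact List.filter_beq c
  have hperm : l.Perm (List.replicate k c ++ l.filter (fun x => !(x == c))) := by
    have := List.filter_append_perm (fun x => x == c) l
    rw [hfilter] at this
    exact this.symm
  have hrep0 : lprd (List.replicate k c : List R) = 0 := by
    have hk1 : k - 1 + 1 = k := by omega
    have : (List.replicate k c : List R) = c :: List.replicate (k - 1) c := by
      conv_lhs => rw [← hk1]
      rw [List.replicate_succ]
    rw [this]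
    show mulList c (List.replicate (k-1) c) = 0
    rw [mulList_replicate]
    have : k - 1 + 1 = k := by omega
    rw [this]
    exact pw_eq_zero_of_le c s k hs h0 hcount
  have hrepne : (List.replicate k c : List R) ≠ [] := by
    intro hh
    have := congrArg List.length hh
    simp at this
    omega
  have h0' : lprd (List.replicate k c ++ l.filter (fun x => !(x == c))) = 0 := by
    by_cases hre : (l.filter (fun x => !(x == c))) = []
    · rw [hre, List.append_nil]; exact hrep0
    · rw [lprd_append _ _ hrepne hre, hrep0, zero_mul]
  exact reach_zero T act h3 hT0
    (reach_of_perm T act h1 h3 f hf hTm hperm hm) h0'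

end fcomm

section listlemmas
variable {α : Type*}

/-- consecutive slices of `W` determined by a list of cut points. -/
def chunks (W : List α) : List ℕ → List (List α)
  | j :: j' :: t => ((W.take j').drop j) :: chunks W (j' :: t)
  | _ => []

theorem chunks_cons (W : List α) (j j' : ℕ) (t : List ℕ) :
    chunks W (j :: j' :: t) = ((W.take j').drop j) :: chunks W (j' :: t) := rfl

theorem chunks_len (W : List α) : ∀ (t : List ℕ) (j : ℕ), (chunks W (j :: t)).length = t.length := by
  intro t
  induction t with
  | nil => intro j; rfl
  | cons j' t' ih => intro j; rw [chunks_cons, List.length_cons, ih j', List.length_cons]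

theorem take_append_seg (W : List α) {j j' : ℕ} (h : j ≤ j') :
    W.take j ++ (W.take j').drop j = W.take j' := by
  have h1 : (W.take j').take j = W.take j := by
    rw [List.take_take, min_eq_left h]
  conv_rhs => rw [← List.take_append_drop j (W.take j')]
  rw [h1]

theorem chunks_flatten (W : List α) : ∀ (t : List ℕ) (j : ℕ), List.Chain (· < ·) j t →
    W.take j ++ (chunks W (j :: t)).flatten = W.take ((j :: t).getLast (by simp)) := by
  intro t
  induction t with
  | nil => intro j _; simp [chunks]
  | cons j' t' ih =>
    intro j hch
    rw [List.Chain, List.isChain_cons_cons] at hch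
    rw [chunks_cons, List.flatten_cons, List.getLast_cons_cons, ← List.append_assoc,
      take_append_seg W (le_of_lt hch.1)]
    exact ih j' hch.2

theorem chunks_sum (W : List α) : ∀ (t : List ℕ) (j : ℕ), List.Chain (· < ·) j t →
    (∀ i ∈ j :: t, i ≤ W.length) →
    ((chunks W (j :: t)).map List.length).sum + j = (j :: t).getLast (by simp) := by
  intro t
  induction t with
  | nil => intro j _ _; simp [chunks]
  | cons j' t' ih =>
    intro j hch hle
    rw [List.Chain, List.isChain_cons_cons] at hch
    have hj' : j' ≤ W.length := hle j' (by simp)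
    have hlen : ((W.take j').drop j).length = j' - j := by
      rw [List.length_drop, List.length_take, min_eq_left hj']
    have := ih j' hch.2 (fun i hi => hle i (by simp at hi ⊢; tauto))
    rw [chunks_cons, List.map_cons, List.sum_cons, hlen, List.getLast_cons_cons]
    omega

theorem chunks_mem_spec (W : List α) : ∀ (t : List ℕ) (j : ℕ), List.Chain (· < ·) j t →
    ∀ ch ∈ chunks W (j :: t), ∃ i i', i < i' ∧ i ∈ j :: t ∧ i' ∈ j :: t ∧
      ch = (W.take i').drop i := by
  intro t
  induction t with
  | nil => intro j _ ch hch; simp [chunks] at hch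
  | cons j' t' ih =>
    intro j hch ch hmem
    rw [List.Chain, List.isChain_cons_cons] at hch
    rw [chunks_cons, List.mem_cons] at hmem
    rcases hmem with rfl | hmem
    · exact ⟨j, j', hch.1, by simp, by simp, rfl⟩
    · obtain ⟨i, i', h1, h2, h3, h4⟩ := ih j' hch.2 ch hmem
      exact ⟨i, i', h1, by simp at h2 ⊢; tauto, by simp at h3 ⊢; tauto, h4⟩

theorem filter_long_le (q : ℕ) : ∀ (l : List (List α)),
    q * (l.filter (fun ch => decide (q ≤ ch.length))).length ≤ (l.map List.length).sum := by
  intro l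
  induction l with
  | nil => simp
  | cons ch t ih =>
    rw [List.map_cons, List.sum_cons, List.filter_cons]
    by_cases h : q ≤ ch.length
    · rw [if_pos (by simpa using h), List.length_cons, Nat.mul_succ]
      omega
    · rw [if_neg (by simpa using h)]
      omega

theorem filter_partition_len (p : List α → Bool) (l : List (List α)) :
    (l.filter p).length + (l.filter (fun a => !(p a))).length = l.length := by
  induction l with
  | nil => rfl
  | cons ch t ih =>
    rw [List.filter_cons, List.filter_cons]
    by_cases h : p ch
    · simp [h, ← ih]; omega
    · simp [h, ← ih]; omega

theorem flatten_ne_nil {l : List (List α)} {ch : List α} (h : ch ∈ l) (hne : ch ≠ []) :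
    l.flatten ≠ [] := by
  intro hfl
  rw [List.flatten_eq_nil_iff] at hfl
  exact hne (hfl ch h)

end listlemmas

section grading
variable {S R : Type*} [Monoid S] [NonUnitalRing R]

theorem wd_mem (A : S → AddSubgroup R)
    (hmul : ∀ {g h : S} {x y : R}, x ∈ A g → y ∈ A h → x * y ∈ A (g * h))
    (b : S → R) (hb : ∀ g, b g ∈ A g) :
    ∀ w : List S, lprd (w.map b) ∈ A w.prod := by
  intro w
  induction w with
  | nil => exact zero_mem _
  | cons g w' ih =>
    rw [List.prod_cons]
    cases w' with
    | nil =>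
      show b g ∈ A (g * 1)
      rw [mul_one]; exact hb g
    | cons g' w'' =>
      rw [List.map_cons, lprd_cons _ _ (by simp)]
      exact hmul (hb g) ih

theorem lprd_flatten' : ∀ (cs : List (List R)), cs ≠ [] → (∀ ch ∈ cs, ch ≠ []) →
    lprd cs.flatten = lprd (cs.map lprd) := by
  intro cs
  induction cs with
  | nil => intro h; exact absurd rfl h
  | cons ch cs' ih =>
    intro _ hch
    rw [List.flatten_cons, List.map_cons]
    cases cs' with
    | nil =>
      rw [show (List.flatten ([] : List (List R))) = [] from rfl, List.append_nil]
      rfl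
    | cons ch₂ cs'' =>
      have hne2 : (ch₂ :: cs'' : List (List R)).flatten ≠ [] :=
        flatten_ne_nil (by simp) (hch ch₂ (by simp))
      rw [lprd_append ch _ (hch ch (by simp)) hne2,
        ih (by simp) (fun z hz => hch z (by simp [hz])),
        lprd_cons _ _ (by simp)]

end grading

theorem count_beq_congr {α : Type*} (i1 i2 : BEq α) (h1 : @LawfulBEq α i1) (h2 : @LawfulBEq α i2)
    (a : α) (l : List α) : @List.count α i1 a l = @List.count α i2 a l := by
  induction l with
  | nil => rfl
  | cons x t ih =>
    rw [@List.count_cons α i1, @List.count_cons α i2, ih]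
    congr 1
    have hb : (@BEq.beq α i1 x a) = (@BEq.beq α i2 x a) := by
      by_cases h : x = a
      · subst h
        rw [@beq_self_eq_true α i1 (@LawfulBEq.toReflBEq α i1 h1), @beq_self_eq_true α i2 (@LawfulBEq.toReflBEq α i2 h2)]
      · rw [@beq_eq_false_iff_ne α i1 h1 x a |>.mpr h, @beq_eq_false_iff_ne α i2 h2 x a |>.mpr h]
    rw [hb]

theorem main_hom {S R : Type*} [Monoid S] [IsLeftCancelMul S] [DecidableEq S] [NonUnitalRing R]
    (A : S → AddSubgroup R)
    (hmul : ∀ {g h : S} {x y : R}, x ∈ A g → y ∈ A h → x * y ∈ A (g * h))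
    (d s : ℕ) (Supp : Finset S) (hSupp : ∀ g : S, A g ≠ ⊥ → g ∈ Supp)
    (hSc : Supp.card = d) (hd : 1 < d) (hs : 1 ≤ s)
    {G : Type} [Semigroup G] (act : G → R → R)
    (h1 : ∀ l m : G, ∀ x : R, x ∈ (A 1 : Set R) → act (l * m) x = act l (act m x))
    (h3 : ∀ l : G, ∀ x y : R, x ∈ (A 1 : Set R) → y ∈ (A 1 : Set R) → act l (x * y) = act l x * y)
    (f : R → R → G)
    (hf : ∀ a b : R, a ∈ (A 1 : Set R) → b ∈ (A 1 : Set R) → a * b = act (f a b) (b * a))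
    (hnil : ∀ a ∈ A 1, pw a s = 0)
    (b : S → R) (hb : ∀ g, b g ∈ A g)
    (F : Finset S) (hF : F ⊆ Supp)
    (W : List S) (hWmem : ∀ g ∈ W, g ∈ F)
    (hlen : W.length = 2 * s * d ^ 2 * ((Finset.range (2*d)).sum (d ^ ·))) :
    lprd (W.map b) = 0 := by
  classical
  set V : ℕ := (Finset.range (2*d)).sum (d ^ ·) with hVdef
  have hV : 3 ≤ V := by
    have h0 : d^0 = 1 := pow_zero d
    have h1' : d^1 = d := pow_one d
    have hsub : (Finset.range 2).sum (d ^ ·) ≤ V :=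
      Finset.sum_le_sum_of_subset (Finset.range_subset_range.mpr (by omega))
    rw [Finset.sum_range_succ, Finset.sum_range_one] at hsub
    omega
  set n := W.length with hndef
  have hn : n = 2 * s * d ^ 2 * V := hlen
  set X := 2 * s * d * V with hXdef
  have hX1 : 12 ≤ X := by
    calc 12 = 2 * 1 * 2 * 3 := rfl
    _ ≤ 2 * s * d * V := by
        apply Nat.mul_le_mul
        apply Nat.mul_le_mul
        apply Nat.mul_le_mul_left
        exact hs
        omega
        exact hV
  have hdX : d * X = n := by rw [hXdef, hn]; ring
  have hnpos : 0 < n := by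
    have : 0 < d * X := Nat.mul_pos (by omega) (by omega)
    omega
  have hWne : W ≠ [] := by
    intro h
    rw [h] at hndef
    simp at hndef
    omega
  -- T and its properties
  set T : Set R := (A 1 : Set R) with hTdef
  have hT0 : (0:R) ∈ T := zero_mem (A 1)
  have hTm : ∀ x ∈ T, ∀ y ∈ T, x * y ∈ T := by
    intro x hx y hy
    have := hmul (g := 1) (h := 1) hx hy
    rwa [mul_one] at this
  by_cases hbot : ∃ j ∈ Finset.Icc 1 n, A ((W.take j).prod) = ⊥
  · -- some prefix lands in a zero component
    obtain ⟨j, hj, hbotj⟩ := hbot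
    rw [Finset.mem_Icc] at hj
    have h0 : lprd ((W.take j).map b) = 0 := by
      have := wd_mem A hmul b hb (W.take j)
      rw [hbotj] at this
      simpa using this
    have hne : (W.take j).map b ≠ [] := by
      have : ((W.take j).map b).length = j := by
        rw [List.length_map, List.length_take, min_eq_left hj.2]
      intro h
      rw [h] at this
      simp at this
      omega
    conv_lhs => rw [← List.take_append_drop j W]
    rw [List.map_append]
    exact lprd_eq_zero_append _ _ hne h0
  · push_neg at hbot
    have hmapsto : ∀ j ∈ Finset.Icc 1 n, (W.take j).prod ∈ Supp :=
      fun j hj => hSupp _ (hbot j hj)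
    have hcardlt : Supp.card * (X - 1) < (Finset.Icc 1 n).card := by
      rw [Nat.card_Icc, hSc]
      have e0 : X = (X - 1) + 1 := by omega
      have e1 : d * X = d * (X-1) + d := by
        conv_lhs => rw [e0]
        rw [Nat.mul_succ]
      omega
    obtain ⟨v, hv, hfib⟩ := Finset.exists_lt_card_fiber_of_mul_lt_card_of_maps_to hmapsto hcardlt
    set O : Finset ℕ := Finset.filter (fun j => (W.take j).prod = v) (Finset.Icc 1 n) with hOdef
    have hOmem : ∀ i ∈ O, 1 ≤ i ∧ i ≤ n ∧ (W.take i).prod = v := by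
      intro i hi
      rw [hOdef, Finset.mem_filter, Finset.mem_Icc] at hi
      exact ⟨hi.1.1, hi.1.2, hi.2⟩
    set m := O.card with hmdef
    have hmX : X ≤ m := by omega
    obtain ⟨j₀, t, hjseq⟩ : ∃ j₀ t, O.sort (· ≤ ·) = j₀ :: t := by
      have hne : O.sort (· ≤ ·) ≠ [] := by
        intro h
        have hls : (O.sort (· ≤ ·)).length = m := Finset.length_sort _
        rw [h] at hls
        simp at hls
        omega
      obtain ⟨a, u, h⟩ := List.exists_cons_of_ne_nil hne
      exact ⟨a, u, h⟩
    have hjslen : (j₀ :: t : List ℕ).length = m := by rw [← hjseq]; exact Finset.length_sort _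
    have hjssorted : List.Pairwise (· < ·) (j₀ :: t : List ℕ) := by
      rw [← hjseq]; exact (Finset.sortedLT_sort O).pairwise
    have hjsmem : ∀ i ∈ (j₀ :: t : List ℕ), i ∈ O := by
      rw [← hjseq]; exact fun i hi => (Finset.mem_sort _).mp hi
    have hjslen' : t.length + 1 = m := by simpa using hjslen
    have hchain : List.Chain (· < ·) j₀ t := List.isChain_iff_pairwise.mpr hjssorted
    set last := (j₀ :: t).getLast (by simp) with hlastdef
    have hlastmem : last ∈ j₀ :: t := List.getLast_mem _
    have hlastO := hOmem last (hjsmem last hlastmem)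
    have hj₀O := hOmem j₀ (hjsmem j₀ (by simp))
    set cs := chunks W (j₀ :: t) with hcsdef
    have hcslen : cs.length = m - 1 := by
      rw [hcsdef, chunks_len]
      omega
    have hflat : W.take j₀ ++ cs.flatten = W.take last := chunks_flatten W t j₀ hchain
    have hsum : (cs.map List.length).sum + j₀ = last := by
      refine chunks_sum W t j₀ hchain ?_
      intro i hi
      exact ((hOmem i (hjsmem i hi)).2.1 : i ≤ n)
    -- each chunk: nonempty, prod = 1, entries in F
    have hchunk : ∀ ch ∈ cs, ch ≠ [] ∧ ch.prod = 1 ∧ (∀ g ∈ ch, g ∈ F) := by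
      intro ch hch
      obtain ⟨i, i', hlt, hi, hi', rfl⟩ := chunks_mem_spec W t j₀ hchain ch hch
      have hiO := hOmem i (hjsmem i hi)
      have hi'O := hOmem i' (hjsmem i' hi')
      have hlen' : ((W.take i').drop i).length = i' - i := by
        rw [List.length_drop, List.length_take, min_eq_left hi'O.2.1]
      refine ⟨?_, ?_, ?_⟩
      · intro h
        rw [h] at hlen'
        simp at hlen'
        omega
      · have hseg : W.take i ++ (W.take i').drop i = W.take i' :=
          take_append_seg W (le_of_lt hlt)
        have : (W.take i).prod * ((W.take i').drop i).prod = (W.take i').prod := by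
          rw [← List.prod_append, hseg]
        rw [hiO.2.2, hi'O.2.2] at this
        have h1' : v * ((W.take i').drop i).prod = v * 1 := by rw [mul_one]; exact this
        exact mul_left_cancel h1'
      · intro g hg
        exact hWmem g (List.mem_of_mem_take (List.mem_of_mem_drop hg))
    -- chunk values
    set cvl : List R := cs.map (fun ch => lprd (ch.map b)) with hcvldef
    have hcvlmem : inT T cvl := by
      intro x hx
      rw [hcvldef, List.mem_map] at hx
      obtain ⟨ch, hch, rfl⟩ := hx
      have := wd_mem A hmul b hb ch
      rw [(hchunk ch hch).2.1] at this
      exact this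
    -- counting long chunks
    set Lg := (cs.filter (fun ch => decide (2*d+1 ≤ ch.length))).length with hLgdef
    have hLg1 : (2*d+1) * Lg ≤ n - 1 := by
      have h1' := filter_long_le (2*d+1) cs
      have h2' : (cs.map List.length).sum ≤ n - 1 := by
        have ha : last ≤ n := hlastO.2.1
        have hb : 1 ≤ j₀ := hj₀O.1
        omega
      exact le_trans h1' h2'
    have hsdv : 1 ≤ s*d*V := by
      have h' : 0 < s*d*V := Nat.mul_pos (Nat.mul_pos (by omega) (by omega)) (by omega)
      omega
    have hLglt : Lg < s * d * V := by
      by_contra hcon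
      push_neg at hcon
      have hm1 : (2*d+1) * (s*d*V) ≤ (2*d+1) * Lg := Nat.mul_le_mul_left _ hcon
      have he : (2*d+1) * (s*d*V) = n + s*d*V := by rw [hn]; ring
      omega
    -- short chunks
    set Sh := cs.filter (fun ch => decide (ch.length ≤ 2*d)) with hShdef
    have hpart : Sh.length + Lg = cs.length := by
      rw [hShdef, hLgdef]
      have : (cs.filter (fun ch => decide (2*d+1 ≤ ch.length))) =
          (cs.filter (fun ch => !(decide (ch.length ≤ 2*d)))) := by
        apply List.filter_congr
        intro ch _
        by_cases h : ch.length ≤ 2*d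
        · simp [h]
        · simp [h]; omega
      rw [this]
      exact filter_partition_len _ cs
    have hX2 : X = 2 * (s*d*V) := by rw [hXdef]; ring
    have hShlen : s * d * V ≤ Sh.length := by omega
    -- pigeonhole on words
    have hex : ∃ w₀, s ≤ Sh.count w₀ := by
      by_contra hno
      push_neg at hno
      set Words : Finset (List S) := (Finset.range (2*d)).biUnion
        (fun i => (Fintype.piFinset (fun _ : Fin (i+1) => F)).image List.ofFn) with hWodef
      have hWc : Words.card ≤ d * V := by
        calc Words.card ≤ ∑ i ∈ Finset.range (2*d),
            ((Fintype.piFinset (fun _ : Fin (i+1) => F)).image List.ofFn).card :=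
              Finset.card_biUnion_le
        _ ≤ ∑ i ∈ Finset.range (2*d), d^(i+1) := by
            apply Finset.sum_le_sum
            intro i _
            calc ((Fintype.piFinset (fun _ : Fin (i+1) => F)).image List.ofFn).card
                ≤ (Fintype.piFinset (fun _ : Fin (i+1) => F)).card := Finset.card_image_le
            _ = F.card ^ (i+1) := by
                rw [Fintype.card_piFinset]
                simp
            _ ≤ d^(i+1) := Nat.pow_le_pow_left (by rw [← hSc]; exact Finset.card_le_card hF) _
        _ = d * V := by
            rw [hVdef, Finset.mul_sum]
            apply Finset.sum_congr rfl
            intro i _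
            rw [pow_succ]
            ring
      have hsub : Sh.toFinset ⊆ Words := by
        intro a ha
        rw [List.mem_toFinset] at ha
        have haSh := ha
        rw [hShdef, List.mem_filter] at ha
        obtain ⟨hacs, halen⟩ := ha
        have hprops := hchunk a hacs
        have halen' : a.length ≤ 2*d := by simpa using halen
        have hane : a ≠ [] := hprops.1
        have halen1 : 1 ≤ a.length := List.length_pos_iff.mpr hane
        rw [hWodef, Finset.mem_biUnion]
        refine ⟨a.length - 1, Finset.mem_range.mpr (by omega), ?_⟩
        rw [Finset.mem_image]
        have hlen2 : a.length = (a.length - 1) + 1 := by omega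
        refine ⟨fun i => a.get (Fin.cast hlen2.symm i), ?_, ?_⟩
        · rw [Fintype.mem_piFinset]
          intro i
          exact hprops.2.2 _ (a.get_mem _)
        · rw [← List.ofFn_congr hlen2 a.get, List.ofFn_get]
      have hcount : ∀ a ∈ Sh.toFinset, Sh.count a ≤ s - 1 := by
        intro a _
        have h' := hno a
        omega
      have hcc : ∀ (a : List S), Sh.count a = @List.count (List S) instBEqOfDecidableEq a Sh :=
        fun a => count_beq_congr _ _ inferInstance inferInstance a Sh
      have : Sh.length ≤ (s-1) * (d * V) := by
        calc Sh.length = ∑ a ∈ Sh.toFinset, @List.count (List S) instBEqOfDecidableEq a Sh :=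
            (List.sum_toFinset_count_eq_length _).symm
        _ = ∑ a ∈ Sh.toFinset, Sh.count a := Finset.sum_congr rfl (fun a _ => (hcc a).symm)
        _ ≤ ∑ _a ∈ Sh.toFinset, (s-1) := Finset.sum_le_sum hcount
        _ = Sh.toFinset.card * (s-1) := by
            rw [Finset.sum_const, smul_eq_mul]
        _ ≤ (d * V) * (s - 1) := by
            apply Nat.mul_le_mul_right
            exact le_trans (Finset.card_le_card hsub) hWc
        _ = (s-1) * (d*V) := by ring
      have hdV : 0 < d * V := Nat.mul_pos (by omega) (by omega)
      have hlt2 : (s-1) * (d*V) < s * (d*V) := by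
        have e0 : s = (s-1) + 1 := by omega
        have e1 : s * (d*V) = (s-1)*(d*V) + d*V := by
          conv_lhs => rw [e0]
          rw [Nat.succ_mul]
        omega
      have : s * d * V = s * (d * V) := by ring
      omega
    obtain ⟨w₀, hw₀count⟩ := hex
    have hw₀Sh : w₀ ∈ Sh := by
      rw [← List.count_pos_iff]
      omega
    have hw₀cs : w₀ ∈ cs := List.mem_of_mem_filter hw₀Sh
    set c : R := lprd (w₀.map b) with hcdef
    have hcT : c ∈ T := by
      have := wd_mem A hmul b hb w₀
      rw [(hchunk w₀ hw₀cs).2.1] at this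
      exact this
    have hc0 : pw c s = 0 := hnil c hcT
    have hccount : s ≤ cvl.count c := by
      have h1' : Sh.count w₀ ≤ cs.count w₀ :=
        List.Sublist.count_le w₀ (List.filter_sublist)
      have h2' : cs.count w₀ ≤ cvl.count c :=
        List.count_le_count_map (l := cs) (f := fun ch => lprd (ch.map b)) (x := w₀)
      omega
    have hcvl0 : lprd cvl = 0 :=
      lprd_eq_zero_of_count T act h1 h3 f hf hT0 hTm cvl hcvlmem c s hs hccount hc0
    -- conclude
    have hcsne : cs ≠ [] := by
      intro h
      rw [h] at hcslen
      simp at hcslen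
      omega
    have hflatmap : lprd ((cs.flatten).map b) = 0 := by
      rw [List.map_flatten]
      rw [lprd_flatten' (cs.map (List.map b))
        (by simpa using hcsne)
        (by
          intro ch hch
          rw [List.mem_map] at hch
          obtain ⟨ch₀, hch₀, rfl⟩ := hch
          simpa using (hchunk ch₀ hch₀).1)]
      rw [List.map_map]
      exact hcvl0
    have hWsplit : W = (W.take j₀ ++ cs.flatten) ++ W.drop last := by
      rw [hflat, List.take_append_drop]
    have htakene : (W.take j₀).map b ≠ [] := by
      have : ((W.take j₀).map b).length = j₀ := by
        rw [List.length_map, List.length_take, min_eq_left (le_trans hj₀O.2.1 (le_refl n))]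
      intro h
      rw [h] at this
      simp at this
      have := hj₀O.1
      omega
    have hflatne : (cs.flatten).map b ≠ [] := by
      have h2' : cs.flatten ≠ [] := by
        obtain ⟨ch, hch⟩ := List.exists_mem_of_ne_nil cs hcsne
        exact flatten_ne_nil hch (hchunk ch hch).1
      simpa using h2'
    conv_lhs => rw [hWsplit]
    rw [List.map_append, List.map_append]
    apply lprd_eq_zero_append
    · intro h
      rw [List.append_eq_nil_iff] at h
      exact htakene h.1
    · rw [lprd_append _ _ htakene hflatne, hflatmap, mul_zero]

theorem geom_nat (d : ℕ) (hd : 1 ≤ d) : ∀ k, (d-1) * (Finset.range k).sum (d ^ ·) = d^k - 1 := by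
  intro k
  induction k with
  | zero => simp
  | succ j ih =>
    rw [Finset.sum_range_succ, Nat.mul_add, ih]
    have h1 : (d-1) * d^j = d^(j+1) - d^j := by
      rw [Nat.sub_mul, one_mul, pow_succ, mul_comm (d^j) d]
    have h2 : 1 ≤ d^j := Nat.one_le_pow _ _ (by omega)
    have h3 : d^j ≤ d^(j+1) := Nat.pow_le_pow_right (by omega) (by omega)
    omega

theorem pw_mem_closure {S R : Type*} [NonUnitalRing R] (b : S → R) (F : Finset S) :
    ∀ k : ℕ, pw (∑ g ∈ F, b g) (k+1) ∈ AddSubgroup.closure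
      {r : R | ∃ w : List S, w ≠ [] ∧ w.length = k+1 ∧ (∀ g ∈ w, g ∈ F) ∧ r = lprd (w.map b)} := by
  intro k
  induction k with
  | zero =>
    show (∑ g ∈ F, b g) ∈ _
    apply sum_mem
    intro g hg
    apply AddSubgroup.subset_closure
    exact ⟨[g], by simp, by simp, by simpa using hg, rfl⟩
  | succ j ih =>
    have hstep : pw (∑ g ∈ F, b g) (j+2) = pw (∑ g ∈ F, b g) (j+1) * (∑ g ∈ F, b g) := rfl
    rw [hstep]
    refine AddSubgroup.closure_induction
      (p := fun x _ => x * (∑ g ∈ F, b g) ∈ AddSubgroup.closure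
        {r : R | ∃ w : List S, w ≠ [] ∧ w.length = j+2 ∧ (∀ g ∈ w, g ∈ F) ∧ r = lprd (w.map b)})
      ?_ ?_ ?_ ?_ ih
    · rintro x ⟨w, hne, hlen, hmem, rfl⟩
      show lprd (List.map b w) * (∑ g ∈ F, b g) ∈ _
      rw [Finset.mul_sum]
      apply sum_mem
      intro g hg
      apply AddSubgroup.subset_closure
      refine ⟨w ++ [g], by simp, by simp [hlen], ?_, ?_⟩
      · intro g' hg'
        rcases List.mem_append.mp hg' with h | h
        · exact hmem g' h
        · simp at h; subst h; exact hg
      · rw [List.map_append]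
        rw [lprd_append _ _ (by simpa using hne) (by simp)]
        rfl
    · show (0:R) * (∑ g ∈ F, b g) ∈ _
      rw [zero_mul]; exact zero_mem _
    · intro x y _ _ hx hy
      show (x + y) * (∑ g ∈ F, b g) ∈ _
      rw [add_mul]
      exact add_mem hx hy
    · intro x _ hx
      show (-x) * (∑ g ∈ F, b g) ∈ _
      rw [neg_mul]
      exact neg_mem hx


set_option maxHeartbeats 1000000 in
theorem stmt_7 {S R : Type*} [Monoid S] [IsLeftCancelMul S] [DecidableEq S]
    [NonUnitalRing R] (A : S → AddSubgroup R) (hA : IsGrading A)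
    (d s : ℕ) (hfin : {g : S | A g ≠ ⊥}.Finite) (hcard : hfin.toFinset.card = d)
    (hd : 1 < d) (hs : 1 ≤ s)
    (hfc : IsFCommutativeOn (A 1 : Set R)) (hnil : ∀ a ∈ A 1, pw a s = 0) :
    ∀ a : R, pw a (2 * s * d ^ 2 * ((d ^ (2 * d) - 1) / (d - 1))) = 0 := by
  classical
  intro a
  -- rewrite the exponent via the geometric sum
  have hgeom : (d ^ (2 * d) - 1) / (d - 1) = (Finset.range (2*d)).sum (d ^ ·) := by
    have hmul := geom_nat d (by omega) (2*d)
    refine Nat.div_eq_of_eq_mul_left (by omega) ?_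
    rw [← hmul]
    ring
  rw [hgeom]
  set V : ℕ := (Finset.range (2*d)).sum (d ^ ·) with hVdef
  -- decompose a into homogeneous components
  obtain ⟨x, hx⟩ := hA.isInternal.surjective a
  set F : Finset S := DFinsupp.support x with hFdef
  set b : S → R := fun g => ((x g : A g) : R) with hbdef
  have hb : ∀ g, b g ∈ A g := fun g => (x g).2
  have ha : a = ∑ g ∈ F, b g := by
    rw [← hx]
    conv_lhs => rw [← DirectSum.sum_support_of x]
    rw [map_sum]
    apply Finset.sum_congr rfl
    intro g _
    exact DirectSum.coeAddMonoidHom_of A g (x g)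
  have hFsub : F ⊆ hfin.toFinset := by
    intro g hg
    rw [hFdef, DFinsupp.mem_support_iff] at hg
    rw [Set.Finite.mem_toFinset, Set.mem_setOf_eq]
    intro hbot
    apply hg
    have h0 : ∀ y : R, y ∈ A g → y = 0 := by
      intro y hy
      rw [hbot] at hy
      simpa using hy
    exact Subtype.ext (h0 _ (x g).2)
  -- f-commutativity data
  obtain ⟨G, hG, act, h1, h2, h3, f, hf⟩ := hfc
  letI : Semigroup G := hG
  -- the generators vanish
  set N : ℕ := 2 * s * d ^ 2 * V with hNdef
  have hN1 : 1 ≤ N := by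
    have hV1 : 1 ≤ V := by
      have : (Finset.range 1).sum (d ^ ·) ≤ V :=
        Finset.sum_le_sum_of_subset (Finset.range_subset_range.mpr (by omega))
      rw [Finset.sum_range_one] at this
      simpa using this
    have : 0 < 2 * s * d^2 * V := by
      apply Nat.mul_pos
      apply Nat.mul_pos
      apply Nat.mul_pos
      omega
      omega
      exact Nat.pow_pos (by omega)
      omega
    omega
  have hmem := pw_mem_closure b F (N - 1)
  rw [show N - 1 + 1 = N from by omega] at hmem
  have hgen : {r : R | ∃ w : List S, w ≠ [] ∧ w.length = N ∧ (∀ g ∈ w, g ∈ F) ∧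
      r = lprd (w.map b)} ⊆ ((⊥ : AddSubgroup R) : Set R) := by
    rintro r ⟨w, hne, hlenw, hmemw, rfl⟩
    rw [SetLike.mem_coe, AddSubgroup.mem_bot]
    exact main_hom A hA.mul_mem d s hfin.toFinset
      (fun g hbot => by rw [Set.Finite.mem_toFinset]; exact hbot)
      hcard hd hs act h1 h3 f hf hnil b hb F hFsub w hmemw hlenw
  have hle : AddSubgroup.closure {r : R | ∃ w : List S, w ≠ [] ∧ w.length = N ∧
      (∀ g ∈ w, g ∈ F) ∧ r = lprd (w.map b)} ≤ ⊥ := (AddSubgroup.closure_le ⊥).mpr hgen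
  have : pw a N ∈ (⊥ : AddSubgroup R) := by
    rw [ha]
    exact hle hmem
  rwa [AddSubgroup.mem_bot] at this
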